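/- In the discrete case-control model, the expected complete-data score at the true parameter equals λ_0 times the gradient of the population prevalence: Σ_{y,z,w} (a_y/f_y) P(w) p(Θ_0, y, z, w) · ∇_Θ log p(Θ, y, z, w)|_{Θ=Θ_0} = λ_0 Σ_w P(w) ∇_Θ L(Θ, w)|_{Θ=Θ_0}, where f_true := f and f_false := 1 − f. -/

import Mathlib

open Finset

/-- In the discrete case-control model, the expected complete-data score at
the true parameter equals `λ₀` times the gradient of the population
prevalence. Here `y` plays the role of the case-control status (with
`f_true = f`, `f_false = 1 - f`, `a_true = a₁`, `a_false = a₀`),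
`L Θ w = ∑ z, p Θ true z w`, and gradients are `fderiv`s in `Θ`. -/
theorem expected_complete_data_score {W Z : Type*} [Fintype W] [Fintype Z]
    (k : ℕ) (p : (Fin k → ℝ) → Bool → Z → W → ℝ) (Θ₀ : Fin k → ℝ)
    (hp_nonneg : ∀ Θ y z w, 0 ≤ p Θ y z w)
    (hp_sum : ∀ Θ w, ∑ y : Bool, ∑ z : Z, p Θ y z w = 1)
    (hp_diff : ∀ y z w, DifferentiableAt ℝ (fun Θ => p Θ y z w) Θ₀)
    (hp_pos : ∀ y z w, 0 < p Θ₀ y z w)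
    (P : W → ℝ) (hP_nonneg : ∀ w, 0 ≤ P w) (hP_sum : ∑ w, P w = 1)
    (a₀ a₁ : ℝ) (ha₀ : 0 < a₀) (ha₁ : 0 < a₁) (ha : a₀ + a₁ = 1)
    (f : ℝ) (hf : f = ∑ w, P w * ∑ z : Z, p Θ₀ true z w)
    (hf0 : 0 < f) (hf1 : f < 1)
    (lam₀ : ℝ) (hlam : lam₀ = a₁ / f - a₀ / (1 - f)) :
    ∑ y : Bool, ∑ z : Z, ∑ w : W,
      ((if y then a₁ else a₀) / (if y then f else 1 - f) * P w * p Θ₀ y z w) •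
        fderiv ℝ (fun Θ => Real.log (p Θ y z w)) Θ₀
      = lam₀ • ∑ w : W, P w • fderiv ℝ (fun Θ => ∑ z : Z, p Θ true z w) Θ₀ := by
  classical
  set D : Bool → Z → W → (Fin k → ℝ) →L[ℝ] ℝ :=
    fun y z w => fderiv ℝ (fun Θ => p Θ y z w) Θ₀ with hD
  have hlog : ∀ (y : Bool) (z : Z) (w : W),
      fderiv ℝ (fun Θ => Real.log (p Θ y z w)) Θ₀ = (p Θ₀ y z w)⁻¹ • D y z w :=
    fun y z w => (((hp_diff y z w).hasFDerivAt).log (hp_pos y z w).ne').fderiv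
  have hDw : ∀ w, fderiv ℝ (fun Θ => ∑ z : Z, p Θ true z w) Θ₀ = ∑ z, D true z w := by
    intro w
    exact (HasFDerivAt.fun_sum fun z _ => (hp_diff true z w).hasFDerivAt).fderiv
  have hzero : ∀ w, (∑ z, D false z w) = -(∑ z, D true z w) := by
    intro w
    have h1 : HasFDerivAt (fun Θ => ∑ y : Bool, ∑ z : Z, p Θ y z w)
        (∑ y : Bool, ∑ z : Z, D y z w) Θ₀ :=
      HasFDerivAt.fun_sum fun y _ => HasFDerivAt.fun_sum fun z _ => (hp_diff y z w).hasFDerivAt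
    have h2 : (fun Θ : Fin k → ℝ => ∑ y : Bool, ∑ z : Z, p Θ y z w) = fun _ => (1:ℝ) :=
      funext fun Θ => hp_sum Θ w
    rw [h2] at h1
    have h3 := h1.unique (hasFDerivAt_const 1 Θ₀)
    have h4 : (∑ z, D true z w) + (∑ z, D false z w) = 0 := by
      simpa [Fintype.sum_bool] using h3
    linear_combination (norm := abel) h4
  have hco : ∀ (y : Bool) (z : Z) (w : W),
      ((if y then a₁ else a₀) / (if y then f else 1 - f) * P w * p Θ₀ y z w) •
        fderiv ℝ (fun Θ => Real.log (p Θ y z w)) Θ₀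
        = ((if y then a₁ else a₀) / (if y then f else 1 - f) * P w) • D y z w := by
    intro y z w
    rw [hlog, smul_smul]
    congr 1
    rw [mul_assoc, mul_inv_cancel₀ (hp_pos y z w).ne', mul_one]
  simp only [hco]
  rw [Fintype.sum_bool]
  simp only [reduceIte, show (false = true) = False by simp, if_false]
  rw [Finset.sum_comm (f := fun (z : Z) (w : W) => (a₁ / f * P w) • D true z w),
    Finset.sum_comm (f := fun (z : Z) (w : W) => (a₀ / (1 - f) * P w) • D false z w)]
  rw [Finset.smul_sum, ← Finset.sum_add_distrib]
  refine Finset.sum_congr rfl fun w _ => ?_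
  rw [← Finset.smul_sum, ← Finset.smul_sum, hzero, hDw, smul_neg, ← sub_eq_add_neg, ← sub_smul,
    smul_smul]
  congr 1
  subst hlam
  ring
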